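/- Let n ≥ 3, let μ be a finite Borel measure on ℝⁿ, q ∈ ℝⁿ, e ∈ ℝⁿ a unit vector, and let 0 < a ≤ R. Suppose the support of μ is contained in {y ∈ ℝⁿ : ⟨e, y − q⟩ ≥ a} ∩ {y : ‖y − q‖ ≤ R}. Then the potential u(x) := ∫ ‖x − y‖^{2−n} dμ(y) is differentiable at q and the directional derivative of u at q along e satisfies ⟨e, ∇u(q)⟩ ≥ (n − 2) a μ(ℝⁿ) R^{−n}. -/

import Mathlib

open MeasureTheory Metric
open scoped RealInnerProductSpace


set_option synthInstance.maxHeartbeats 1000000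
set_option maxHeartbeats 1000000

variable {E : Type*} [NormedAddCommGroup E] [InnerProductSpace ℝ E]

lemma key_deriv (y x : E) (p : ℝ) (hx : x ≠ y) :
    HasFDerivAt (fun x => ‖x - y‖ ^ p)
      ((p * ‖x - y‖ ^ (p - 2)) • innerSL ℝ (x - y)) x := by
  have hne : ‖x - y‖ ≠ 0 := by
    simpa [sub_eq_zero] using hx
  have h2 : HasFDerivAt (fun x : E => ‖x - y‖ ^ 2) ((2:ℕ) • innerSL ℝ (x - y)) x := by
    simpa using ((hasFDerivAt_id x).sub_const y).norm_sq
  have h3 : HasDerivAt (fun t : ℝ => t ^ (p / 2))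
      ((p / 2) * (‖x - y‖ ^ 2) ^ (p / 2 - 1)) (‖x - y‖ ^ 2) :=
    Real.hasDerivAt_rpow_const (Or.inl (pow_ne_zero 2 hne))
  have h4 := h3.comp_hasFDerivAt x h2
  have hfun : (fun x : E => (‖x - y‖ ^ 2) ^ (p / 2)) = fun x : E => ‖x - y‖ ^ p := by
    funext z
    rw [← Real.rpow_natCast ‖z - y‖ 2, ← Real.rpow_mul (norm_nonneg _)]
    congr 1
    push_cast
    ring
  have hs : (‖x - y‖ ^ 2) ^ (p / 2 - 1) = ‖x - y‖ ^ (p - 2) := by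
    rw [← Real.rpow_natCast ‖x - y‖ 2, ← Real.rpow_mul (norm_nonneg _)]
    congr 1
    push_cast
    ring
  have hder : ((p / 2) * (‖x - y‖ ^ 2) ^ (p / 2 - 1)) • ((2:ℕ) • innerSL ℝ (x - y))
      = (p * ‖x - y‖ ^ (p - 2)) • innerSL ℝ (x - y) := by
    rw [hs]
    ext w
    simp only [ContinuousLinearMap.smul_apply, ContinuousLinearMap.coe_smul', Pi.smul_apply,
      smul_eq_mul, nsmul_eq_mul, Nat.cast_ofNat]
    ring
  rw [← hfun, ← hder]
  exact h4

lemma norm_smul_innerSL (v : E) (t : ℝ) : ‖t • innerSL ℝ v‖ = |t| * ‖v‖ := by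
  rw [norm_smul t (innerSL ℝ v), innerSL_apply_norm, Real.norm_eq_abs]

set_option maxHeartbeats 1000000 in

/-- If `μ` is a finite Borel measure on `ℝⁿ` (`n ≥ 3`) supported in
`{y : ⟨e, y - q⟩ ≥ a} ∩ {y : ‖y - q‖ ≤ R}` with `0 < a ≤ R` and `e` a unit vector, then the
potential `u(x) = ∫ ‖x - y‖^{2-n} dμ(y)` is differentiable at `q` and its directional
derivative at `q` along `e` is at least `(n-2) a μ(ℝⁿ) R^{-n}`. -/
theorem stmt5 (n : ℕ) (hn : 3 ≤ n)
    (μ : Measure (EuclideanSpace ℝ (Fin n))) [IsFiniteMeasure μ]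
    (q e : EuclideanSpace ℝ (Fin n)) (he : ‖e‖ = 1)
    (a R : ℝ) (ha : 0 < a) (haR : a ≤ R)
    (hsupp : μ ({y | a ≤ ⟪e, y - q⟫ ∧ ‖y - q‖ ≤ R}ᶜ) = 0) :
    ∃ g : EuclideanSpace ℝ (Fin n),
      HasGradientAt (fun x => ∫ y, ‖x - y‖ ^ ((2 : ℝ) - n) ∂μ) g q ∧
      ((n : ℝ) - 2) * a * (μ Set.univ).toReal * R ^ (-(n : ℝ)) ≤ ⟪e, g⟫ := by
  have hn3 : (3:ℝ) ≤ (n:ℝ) := by exact_mod_cast hn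
  set p : ℝ := (2:ℝ) - n with hp
  have hpneg : p < 0 := by rw [hp]; linarith
  have habs : |p| = (n:ℝ) - 2 := by rw [abs_of_neg hpneg, hp]; ring
  have hae : ∀ᵐ y ∂μ, a ≤ ⟪e, y - q⟫ ∧ ‖y - q‖ ≤ R := by
    rw [ae_iff]
    simpa [Set.compl_setOf] using hsupp
  have haq : ∀ y : EuclideanSpace ℝ (Fin n), a ≤ ⟪e, y - q⟫ → a ≤ ‖q - y‖ := by
    intro y hy
    rw [norm_sub_rev]
    calc a ≤ ⟪e, y - q⟫ := hy
    _ ≤ ‖e‖ * ‖y - q‖ := real_inner_le_norm e (y - q)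
    _ = ‖y - q‖ := by rw [he, one_mul]
  set c : EuclideanSpace ℝ (Fin n) → ℝ := fun y => p * ‖q - y‖ ^ (p - 2) with hc
  set f : EuclideanSpace ℝ (Fin n) → EuclideanSpace ℝ (Fin n) := fun y => c y • (q - y) with hfdef
  set F' : EuclideanSpace ℝ (Fin n) → EuclideanSpace ℝ (Fin n) →
      (EuclideanSpace ℝ (Fin n) →L[ℝ] ℝ) :=
    fun x y => (p * ‖x - y‖ ^ (p - 2)) • innerSL ℝ (x - y) with hF'def
  have hFmeas : ∀ x : EuclideanSpace ℝ (Fin n),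
      AEStronglyMeasurable (fun y => ‖x - y‖ ^ p) μ := fun x =>
    ((measurable_const.sub measurable_id).norm.pow measurable_const).aestronglyMeasurable
  have hcmeas : Measurable c :=
    measurable_const.mul ((measurable_const.sub measurable_id).norm.pow measurable_const)
  have hsubcont : Continuous fun y : EuclideanSpace ℝ (Fin n) => q - y :=
    continuous_const.sub continuous_id
  have hfmeas : AEStronglyMeasurable f μ :=
    hcmeas.aestronglyMeasurable.smul hsubcont.aestronglyMeasurable
  have hF'meas : AEStronglyMeasurable (F' q) μ :=
    hcmeas.aestronglyMeasurable.smul ((innerSL ℝ).continuous.comp hsubcont).aestronglyMeasurable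
  -- integrability of F q
  have hintF : Integrable (fun y => ‖q - y‖ ^ p) μ := by
    apply Integrable.mono' (integrable_const (a ^ p)) (hFmeas q)
    filter_upwards [hae] with y hy
    rw [Real.norm_of_nonneg (Real.rpow_nonneg (norm_nonneg _) _)]
    exact Real.rpow_le_rpow_of_nonpos ha (haq y hy.1) hpneg.le
  -- pointwise norm bounds
  have hnormbound : ∀ (x y : EuclideanSpace ℝ (Fin n)) (b : ℝ), 0 < b → b ≤ ‖x - y‖ →
      |p * ‖x - y‖ ^ (p - 2)| * ‖x - y‖ ≤ ((n:ℝ) - 2) * b ^ (p - 1) := by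
    intro x y b hb hbxy
    have hxy : 0 < ‖x - y‖ := lt_of_lt_of_le hb hbxy
    rw [abs_mul, habs, abs_of_nonneg (Real.rpow_nonneg (norm_nonneg _) _), mul_assoc]
    gcongr
    · linarith
    calc ‖x - y‖ ^ (p - 2) * ‖x - y‖ = ‖x - y‖ ^ (p - 2 + 1) := by
          rw [Real.rpow_add_one hxy.ne' (p - 2)]
    _ = ‖x - y‖ ^ (p - 1) := by ring_nf
    _ ≤ b ^ (p - 1) := Real.rpow_le_rpow_of_nonpos hb hbxy (by linarith)
  have hball : ∀ᵐ y ∂μ, ∀ x ∈ ball q (a/2), a/2 ≤ ‖x - y‖ := by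
    filter_upwards [hae] with y hy x hx
    have h1 : a ≤ ‖q - y‖ := haq y hy.1
    have h2 : ‖x - q‖ < a / 2 := by rwa [mem_ball, dist_eq_norm] at hx
    have h3 : ‖q - y‖ ≤ ‖q - x‖ + ‖x - y‖ := norm_sub_le_norm_sub_add_norm_sub q x y
    rw [norm_sub_rev q x] at h3
    linarith
  have h_bound : ∀ᵐ y ∂μ, ∀ x ∈ ball q (a/2),
      ‖F' x y‖ ≤ ((n:ℝ) - 2) * (a/2) ^ (p - 1) := by
    filter_upwards [hball] with y hy x hx
    have := hy x hx
    rw [hF'def]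
    simp only
    rw [norm_smul_innerSL]
    exact hnormbound x y (a/2) (by linarith) this
  have h_diff : ∀ᵐ y ∂μ, ∀ x ∈ ball q (a/2),
      HasFDerivAt (fun x => ‖x - y‖ ^ p) (F' x y) x := by
    filter_upwards [hball] with y hy x hx
    have hxy : x ≠ y := by
      intro h
      have := hy x hx
      rw [h] at this
      simp at this
      linarith
    exact key_deriv y x p hxy
  have HFD : HasFDerivAt (fun x => ∫ y, ‖x - y‖ ^ p ∂μ) (∫ y, F' q y ∂μ) q :=
    hasFDerivAt_integral_of_dominated_of_fderiv_le (ball_mem_nhds q (half_pos ha))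
      (Filter.Eventually.of_forall hFmeas) (hintF) hF'meas h_bound
      (integrable_const _) h_diff
  -- integrability of f
  have hintf : Integrable f μ := by
    apply Integrable.mono' (integrable_const (((n:ℝ) - 2) * a ^ (p - 1))) hfmeas
    filter_upwards [hae] with y hy
    rw [hfdef]
    simp only
    rw [norm_smul, Real.norm_eq_abs, hc]
    exact hnormbound q y a ha (haq y hy.1)
  -- identify the fderiv with toDual of the vector integral
  have htd : (∫ y, F' q y ∂μ) = (InnerProductSpace.toDual ℝ _) (∫ y, f y ∂μ) := by
    have hcomm := ContinuousLinearEquiv.integral_comp_comm (μ := μ)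
      (InnerProductSpace.toDual ℝ (EuclideanSpace ℝ (Fin n))).toContinuousLinearEquiv f
    simp only [LinearIsometryEquiv.coe_toContinuousLinearEquiv] at hcomm
    rw [← hcomm]
    refine integral_congr_ae (Filter.Eventually.of_forall fun y => ?_)
    ext w
    simp [hF'def, hfdef, hc, real_inner_smul_left]
  refine ⟨∫ y, f y ∂μ, ?_, ?_⟩
  · rw [hasGradientAt_iff_hasFDerivAt, ← htd]
    exact HFD
  · have hinner : ⟪e, ∫ y, f y ∂μ⟫ = ∫ y, ⟪e, f y⟫ ∂μ := (integral_inner hintf e).symm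
    have hintinner : Integrable (fun y => ⟪e, f y⟫) μ := by
      have := (innerSL ℝ e).integrable_comp hintf
      simpa using this
    have hlow : ∀ᵐ y ∂μ, ((n:ℝ) - 2) * a * R ^ (-(n:ℝ)) ≤ ⟪e, f y⟫ := by
      filter_upwards [hae] with y hy
      have h1 : a ≤ ‖q - y‖ := haq y hy.1
      have hqy : 0 < ‖q - y‖ := lt_of_lt_of_le ha h1
      have hqyR : ‖q - y‖ ≤ R := by rw [norm_sub_rev]; exact hy.2
      have heq : ⟪e, f y⟫ = ((n:ℝ) - 2) * ⟪e, y - q⟫ * ‖q - y‖ ^ (p - 2) := by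
        rw [hfdef]
        simp only
        rw [real_inner_smul_right, hc]
        have : ⟪e, q - y⟫ = -⟪e, y - q⟫ := by
          rw [show q - y = -(y - q) by abel, inner_neg_right]
        rw [this, hp]
        ring
      rw [heq]
      have h2 : R ^ (-(n:ℝ)) ≤ ‖q - y‖ ^ (p - 2) := by
        have hpe : p - 2 = -(n:ℝ) := by rw [hp]; ring
        rw [hpe]
        exact Real.rpow_le_rpow_of_nonpos hqy hqyR (by simp)
      have hRn : (0:ℝ) ≤ R ^ (-(n:ℝ)) :=
        Real.rpow_nonneg (by linarith) _
      apply mul_le_mul _ h2 hRn _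
      · gcongr
        · linarith
        · exact hy.1
      · have : (0:ℝ) ≤ ⟪e, y - q⟫ := le_trans ha.le hy.1
        nlinarith
    have hmono := integral_mono_ae (integrable_const (((n:ℝ) - 2) * a * R ^ (-(n:ℝ)))) hintinner hlow
    rw [integral_const, smul_eq_mul] at hmono
    rw [hinner]
    calc ((n:ℝ) - 2) * a * (μ Set.univ).toReal * R ^ (-(n:ℝ))
        = (μ Set.univ).toReal * (((n:ℝ) - 2) * a * R ^ (-(n:ℝ))) := by ring
    _ ≤ ∫ y, ⟪e, f y⟫ ∂μ := hmono
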